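/- For any differentiable n×n-matrix-valued function A(t) with characteristic coefficients σ_m(t) (elementary symmetric functions of the eigenvalues, i.e., σ_m = e_m of eigenvalues counted with multiplicity), the derivative satisfies σ_m' = Σ_{i=0}^{m-1} (-1)^i σ_{m-i-1} tr(A^i A') for m = 1, ..., n. -/

import Mathlib

open Finset Matrix Polynomial

private lemma trace_adj_mul {n : ℕ} (M N : Matrix (Fin n) (Fin n) ℝ) :
    (M.adjugate * N).trace = ∑ i, (M.updateCol i fun r => N r i).det := by
  simp only [← Matrix.cramer_apply, Matrix.cramer_eq_adjugate_mulVec]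
  simp [Matrix.trace, Matrix.diag, Matrix.mul_apply, Matrix.mulVec, dotProduct]

private lemma jacobi {n : ℕ} {M M' : ℝ → Matrix (Fin n) (Fin n) ℝ} {t : ℝ}
    (h : ∀ i j, HasDerivAt (fun s => M s i j) (M' t i j) t) :
    HasDerivAt (fun s => (M s).det) ((M t).adjugate * M' t).trace t := by
  have key : (fun s => (M s).det) = fun s => ∑ σ : Equiv.Perm (Fin n),
      ((Equiv.Perm.sign σ : ℤ) : ℝ) * ∏ i, M s (σ i) i := by
    funext s
    rw [Matrix.det_apply']
  rw [key]
  have hd : HasDerivAt (fun s => ∑ σ : Equiv.Perm (Fin n),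
      ((Equiv.Perm.sign σ : ℤ) : ℝ) * ∏ i, M s (σ i) i)
      (∑ σ : Equiv.Perm (Fin n), ((Equiv.Perm.sign σ : ℤ) : ℝ) *
        ∑ i, (∏ j ∈ Finset.univ.erase i, M t (σ j) j) • M' t (σ i) i) t := by
    apply HasDerivAt.fun_sum
    intro σ _
    exact (HasDerivAt.fun_finsetProd (fun i _ => h (σ i) i)).const_mul _
  convert hd using 1
  rw [trace_adj_mul]
  simp only [Finset.mul_sum]
  rw [Finset.sum_comm]
  refine Finset.sum_congr rfl fun i _ => ?_
  rw [Matrix.det_apply']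
  refine Finset.sum_congr rfl fun σ _ => ?_
  rw [← Finset.mul_prod_erase _ _ (Finset.mem_univ i)]
  have h1 : (M t).updateCol i (fun r => M' t r i) (σ i) i = M' t (σ i) i := by
    simp [Matrix.updateCol_apply]
  have h2 : ∏ j ∈ Finset.univ.erase i, (M t).updateCol i (fun r => M' t r i) (σ j) j
      = ∏ j ∈ Finset.univ.erase i, M t (σ j) j := by
    refine Finset.prod_congr rfl fun j hj => ?_
    simp [Matrix.updateCol_apply, (Finset.mem_erase.mp hj).1]
  rw [h1, h2, smul_eq_mul]
  ring

private lemma charmatrix_map_eval {n : ℕ} (M : Matrix (Fin n) (Fin n) ℝ) (x : ℝ) :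
    (charmatrix M).map (Polynomial.evalRingHom x) = Matrix.diagonal (fun _ => x) - M := by
  ext i j
  by_cases hij : i = j
  · subst hij; simp [charmatrix_apply_eq]
  · simp [charmatrix_apply_ne _ _ _ hij, Matrix.diagonal_apply_ne _ hij]

private lemma eval_charpoly' {n : ℕ} (M : Matrix (Fin n) (Fin n) ℝ) (x : ℝ) :
    M.charpoly.eval x = (Matrix.diagonal (fun _ => x) - M).det := by
  rw [Matrix.charpoly, ← coe_evalRingHom, RingHom.map_det, RingHom.mapMatrix_apply,
    charmatrix_map_eval]

private lemma adj_coeff_rec {n : ℕ} (M : Matrix (Fin n) (Fin n) ℝ) (k : ℕ) :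
    (matPolyEquiv (charmatrix M).adjugate).coeff k
      = M * (matPolyEquiv (charmatrix M).adjugate).coeff (k+1)
        + M.charpoly.coeff (k+1) • 1 := by
  have hGmul : (X - Polynomial.C M) * matPolyEquiv (charmatrix M).adjugate
      = M.charpoly.map (algebraMap ℝ (Matrix (Fin n) (Fin n) ℝ)) := by
    rw [← matPolyEquiv_charmatrix, ← _root_.map_mul, Matrix.mul_adjugate, ← Matrix.charpoly,
      matPolyEquiv_smul_one]
  have h := congrArg (fun p => p.coeff (k+1)) hGmul
  simp only [sub_mul, coeff_sub, coeff_X_mul, coeff_C_mul, coeff_map,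
    Algebra.algebraMap_eq_smul_one] at h
  linear_combination (norm := abel) h

private lemma adj_coeff_formula {n : ℕ} (M : Matrix (Fin n) (Fin n) ℝ) (N : ℕ)
    (hN : (matPolyEquiv (charmatrix M).adjugate).natDegree < N) :
    ∀ d k, k + d = N → (matPolyEquiv (charmatrix M).adjugate).coeff k
      = ∑ i ∈ Finset.range d, M.charpoly.coeff (k + 1 + i) • M ^ i := by
  intro d
  induction d with
  | zero =>
    intro k hk
    simpa using Polynomial.coeff_eq_zero_of_natDegree_lt (show _ < k by omega)
  | succ d ih =>
    intro k hk
    rw [adj_coeff_rec, ih (k+1) (by omega), Finset.sum_range_succ', Finset.mul_sum]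
    have h0 : M.charpoly.coeff (k+1+0) • M ^ 0
        = M.charpoly.coeff (k+1) • (1 : Matrix (Fin n) (Fin n) ℝ) := by simp
    rw [h0]
    congr 1
    refine Finset.sum_congr rfl fun i _ => ?_
    rw [mul_smul_comm, ← pow_succ']
    congr 2
    omega

/-- For a differentiable matrix-valued function `A(t)` with
`σ_m(t)` the `m`-th elementary symmetric function of the eigenvalues of `A(t)`
(equivalently `σ_m = (-1)^m ·` the coefficient of `X^{n-m}` in the characteristic
polynomial), the derivative satisfies
`σ_m' = Σ_{i=0}^{m-1} (-1)^i σ_{m-i-1} tr(A^i A')`. -/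
theorem deriv_charpoly_esymm (n : ℕ) (A A' : ℝ → Matrix (Fin n) (Fin n) ℝ)
    (hA : ∀ (t : ℝ) (i j : Fin n), HasDerivAt (fun s => A s i j) (A' t i j) t)
    (σ : ℕ → ℝ → ℝ)
    (hσ : ∀ m t, σ m t = (-1 : ℝ) ^ m * ((A t).charpoly.coeff (n - m)))
    (m : ℕ) (hm : 1 ≤ m) (hmn : m ≤ n) (t : ℝ) :
    HasDerivAt (σ m)
      (∑ i ∈ Finset.range m,
        (-1 : ℝ) ^ i * σ (m - i - 1) t * ((A t) ^ i * A' t).trace) t := by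
  set Mt := A t with hMt
  set H := A' t with hH
  set G := matPolyEquiv (charmatrix Mt).adjugate with hG
  set N := max n (G.natDegree + 1) with hN
  set q : ℝ[X] := ∑ i : Fin n, ∑ j : Fin n, (charmatrix Mt).adjugate i j * Polynomial.C (H j i)
    with hq
  -- charpoly coefficients above degree n vanish
  have h_cz : ∀ j, n < j → Mt.charpoly.coeff j = 0 := by
    intro j hj
    apply Polynomial.coeff_eq_zero_of_natDegree_lt
    rw [Matrix.charpoly_natDegree_eq_dim, Fintype.card_fin]
    omega
  -- q coefficients
  have hq1 : ∀ k, q.coeff k = (G.coeff k * H).trace := by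
    intro k
    simp only [hq, finset_sum_coeff, coeff_mul_C]
    simp only [Matrix.trace, Matrix.diag, Matrix.mul_apply, hG, matPolyEquiv_coeff_apply]
  have hq2 : ∀ k, k ≤ N → q.coeff k
      = ∑ i ∈ Finset.range (N - k), Mt.charpoly.coeff (k + 1 + i) * ((Mt ^ i) * H).trace := by
    intro k hk
    rw [hq1, adj_coeff_formula Mt N (show G.natDegree < N by omega) (N - k) k (by omega)]
    simp [Matrix.sum_mul, smul_mul_assoc, Matrix.trace_smul, smul_eq_mul]
  have hqdeg : q.degree < ((n + 1 : ℕ) : WithBot ℕ) := by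
    rw [Polynomial.degree_lt_iff_coeff_zero]
    intro k hk
    have hk' : n + 1 ≤ k := by exact_mod_cast hk
    by_cases hkN : k ≤ N
    · rw [hq2 k hkN]
      refine Finset.sum_eq_zero fun i _ => ?_
      rw [h_cz _ (by omega), zero_mul]
    · rw [hq1, Polynomial.coeff_eq_zero_of_natDegree_lt (show G.natDegree < k by omega)]
      simp
  -- q evaluations
  have hqeval : ∀ x : ℝ, q.eval x
      = ((Matrix.diagonal (fun _ => x) - Mt).adjugate * H).trace := by
    intro x
    have hadj : (Matrix.diagonal (fun _ => x) - Mt).adjugate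
        = ((charmatrix Mt).adjugate).map (Polynomial.evalRingHom x) := by
      rw [← charmatrix_map_eval, ← RingHom.mapMatrix_apply, ← RingHom.mapMatrix_apply,
        ← RingHom.map_adjugate]
    rw [hadj]
    simp only [hq, eval_finset_sum, eval_mul, eval_C]
    simp only [Matrix.trace, Matrix.diag, Matrix.mul_apply, Matrix.map_apply]
    simp only [coe_evalRingHom]
  -- derivative of evaluations (Jacobi's formula)
  have hderiv : ∀ x : ℝ, HasDerivAt (fun s => (A s).charpoly.eval x) (-(q.eval x)) t := by
    intro x
    have hJ := jacobi (M := fun s => Matrix.diagonal (fun _ => x) - A s)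
      (M' := fun s => -(A' s)) (t := t) (fun i j => by
        simpa using ((hA t i j).const_sub ((Matrix.diagonal fun _ : Fin n => x) i j)))
    have heq : (fun s => (A s).charpoly.eval x)
        = fun s => (Matrix.diagonal (fun _ : Fin n => x) - A s).det :=
      funext fun s => eval_charpoly' (A s) x
    rw [heq]
    convert hJ using 1
    rw [hqeval x, Matrix.mul_neg, Matrix.trace_neg]
  -- Lagrange interpolation: coefficients from evaluations
  have hv : Set.InjOn (fun i : ℕ => (i : ℝ)) (Finset.range (n + 1)) :=
    fun a _ b _ hab => Nat.cast_injective hab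
  have hinterp : ∀ p : ℝ[X], p.degree < ((n + 1 : ℕ) : WithBot ℕ) → ∀ k,
      p.coeff k = ∑ x ∈ Finset.range (n + 1), p.eval (x : ℝ) *
        (Lagrange.basis (Finset.range (n + 1)) (fun i : ℕ => (i : ℝ)) x).coeff k := by
    intro p hp k
    conv_lhs => rw [Lagrange.eq_interpolate (f := p) hv (by simpa using hp)]
    rw [Lagrange.interpolate_apply, finset_sum_coeff]
    simp [coeff_C_mul]
  have hdegA : ∀ s : ℝ, ((A s).charpoly).degree < ((n + 1 : ℕ) : WithBot ℕ) := by
    intro s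
    rw [Matrix.charpoly_degree_eq_dim, Fintype.card_fin]
    exact_mod_cast Nat.lt_succ_self n
  -- derivative of the coefficient
  have hck : HasDerivAt (fun s => (A s).charpoly.coeff (n - m)) (-(q.coeff (n - m))) t := by
    have h1 : (fun s => (A s).charpoly.coeff (n - m))
        = fun s => ∑ x ∈ Finset.range (n + 1), (A s).charpoly.eval (x : ℝ) *
          (Lagrange.basis (Finset.range (n + 1)) (fun i : ℕ => (i : ℝ)) x).coeff (n - m) :=
      funext fun s => hinterp _ (hdegA s) _
    rw [h1]
    have h2 := HasDerivAt.fun_sum (fun x (_ : x ∈ Finset.range (n + 1)) =>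
      (hderiv (x : ℝ)).mul_const
        ((Lagrange.basis (Finset.range (n + 1)) (fun i : ℕ => (i : ℝ)) x).coeff (n - m)))
    refine h2.congr_deriv (Eq.symm ?_)
    rw [hinterp q hqdeg (n - m), neg_eq_iff_eq_neg, ← Finset.sum_neg_distrib]
    exact Finset.sum_congr rfl fun x _ => by ring
  -- assemble
  have hσfun : σ m = fun s => (-1 : ℝ) ^ m * (A s).charpoly.coeff (n - m) :=
    funext fun s => hσ m s
  rw [hσfun]
  have hd2 := hck.const_mul ((-1 : ℝ) ^ m)
  refine hd2.congr_deriv (Eq.symm ?_)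
  rw [hq2 (n - m) (by omega)]
  rw [← Finset.sum_subset (Finset.range_subset_range.mpr (show m ≤ N - (n - m) by omega))
    (fun i _ hi => by
      rw [h_cz (n - m + 1 + i) (by simp at hi; omega), zero_mul])]
  rw [mul_neg, Finset.mul_sum, ← Finset.sum_neg_distrib]
  refine Finset.sum_congr rfl fun i hi => ?_
  have him : i < m := Finset.mem_range.mp hi
  rw [hσ (m - i - 1) t]
  have hidx : n - (m - i - 1) = n - m + 1 + i := by omega
  rw [hidx]
  have hsign : (-1 : ℝ) ^ i * (-1 : ℝ) ^ (m - i - 1) = -(-1 : ℝ) ^ m := by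
    have hm' : (-1 : ℝ) ^ m = (-1 : ℝ) ^ (i + (m - i - 1) + 1) := by
      rw [show i + (m - i - 1) + 1 = m by omega]
    rw [hm', pow_add, pow_add, pow_one]
    ring
  rw [hH] at *
  linear_combination ((A t ^ i * A' t).trace * Mt.charpoly.coeff (n - m + 1 + i)) * hsign
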